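/- Let f be a twice differentiable, strictly positive function on [a,b] with f'(a) > 0 and f'' ≥ 0, and let g be a nonnegative, continuous, increasing function on [a,b]. Then for every n ∈ ℕ (n ≥ 1): (b-a)·g(a)^{n+1}/f(b) + (f'(a))ⁿ·((n+1)^{n-1}/n!)·(∫_a^b g/f)^{n+1} ≤ (1/f(a)^{n+1})·∫_a^b fⁿ·g^{n+1}. -/

import Mathlib

open Set MeasureTheory intervalIntegral Real

lemma aux_one_add_pow_le_exp {x : ℝ} (hx : 0 ≤ x) (n : ℕ) (hn : 1 ≤ n) :
    1 + x ^ n / n.factorial ≤ Real.exp x := by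
  refine le_trans ?_ (Real.sum_le_exp_of_nonneg hx (n + 1))
  have hsub : ({0, n} : Finset ℕ) ⊆ Finset.range (n + 1) := by
    intro i hi
    simp only [Finset.mem_insert, Finset.mem_singleton] at hi
    rcases hi with rfl | rfl <;> simp [Finset.mem_range]
  calc 1 + x ^ n / n.factorial
      = ∑ i ∈ ({0, n} : Finset ℕ), x ^ i / i.factorial := by
        rw [Finset.sum_pair (by omega : (0:ℕ) ≠ n)]; simp
    _ ≤ ∑ i ∈ Finset.range (n + 1), x ^ i / i.factorial :=
        Finset.sum_le_sum_of_subset_of_nonneg hsub (fun i _ _ => by positivity)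

theorem stmt7 (a b : ℝ) (hab : a < b)
    (f : ℝ → ℝ)
    (hf_diff : DifferentiableOn ℝ f (Set.Icc a b))
    (hf_diff2 : DifferentiableOn ℝ (derivWithin f (Set.Icc a b)) (Set.Icc a b))
    (hf_pos : ∀ x ∈ Set.Icc a b, 0 < f x)
    (hf'a : 0 < derivWithin f (Set.Icc a b) a)
    (hf''_nonneg : ∀ x ∈ Set.Icc a b,
      0 ≤ derivWithin (derivWithin f (Set.Icc a b)) (Set.Icc a b) x)
    (g : ℝ → ℝ) (hg_nonneg : ∀ x ∈ Set.Icc a b, 0 ≤ g x)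
    (hg_cont : ContinuousOn g (Set.Icc a b))
    (hg_mono : MonotoneOn g (Set.Icc a b))
    (n : ℕ) (hn : 1 ≤ n) :
    (b - a) * g a ^ (n + 1) / f b +
      derivWithin f (Set.Icc a b) a ^ n *
        (((n : ℝ) + 1) ^ (n - 1) / (n.factorial : ℝ)) *
        (∫ x in a..b, g x / f x) ^ (n + 1) ≤
    (1 / f a ^ (n + 1)) * ∫ x in a..b, f x ^ n * g x ^ (n + 1) := by
  have hab' : a ≤ b := hab.le
  have ha_mem : a ∈ Icc a b := ⟨le_rfl, hab'⟩
  have hb_mem : b ∈ Icc a b := ⟨hab', le_rfl⟩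
  set A := f a with hA_def
  set B := derivWithin f (Set.Icc a b) a with hB_def
  have hA : 0 < A := hf_pos a ha_mem
  have hB : 0 < B := hf'a
  have huIcc : Set.uIcc a b = Set.Icc a b := Set.uIcc_of_le hab'
  have hnhds : ∀ x ∈ Ioo a b, Icc a b ∈ nhds x := fun x hx => Icc_mem_nhds hx.1 hx.2
  -- f' is monotone
  set f1 := derivWithin f (Set.Icc a b) with hf1_def
  have hf1mono : MonotoneOn f1 (Icc a b) := by
    apply monotoneOn_of_deriv_nonneg (convex_Icc a b) hf_diff2.continuousOn
    · rw [interior_Icc]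
      exact fun x hx => ((hf_diff2 x (Ioo_subset_Icc_self hx)).differentiableAt
        (hnhds x hx)).differentiableWithinAt
    · intro x hx
      rw [interior_Icc] at hx
      rw [← derivWithin_of_mem_nhds (hnhds x hx)]
      exact hf''_nonneg x (Ioo_subset_Icc_self hx)
  have hf1B : ∀ x ∈ Icc a b, B ≤ f1 x := fun x hx => hf1mono ha_mem hx hx.1
  -- f(x) ≥ A + B (x-a)
  have hphi : MonotoneOn (fun x => f x - B * x) (Icc a b) := by
    apply monotoneOn_of_deriv_nonneg (convex_Icc a b)
      (hf_diff.continuousOn.sub (continuous_const.mul continuous_id').continuousOn)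
    · rw [interior_Icc]
      exact fun x hx => (((hf_diff x (Ioo_subset_Icc_self hx)).differentiableAt
        (hnhds x hx)).sub ((differentiable_id.const_mul B) x)).differentiableWithinAt
    · intro x hx
      rw [interior_Icc] at hx
      have hfd : HasDerivAt f (deriv f x) x :=
        ((hf_diff x (Ioo_subset_Icc_self hx)).differentiableAt (hnhds x hx)).hasDerivAt
      have hd : HasDerivAt (fun y => f y - B * y) (deriv f x - B) x := by
        exact (hfd.sub ((hasDerivAt_id x).const_mul B)).congr_deriv (by ring)
      rw [show deriv (f - (fun _ => B) * fun x => x) x = deriv f x - B from hd.deriv]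
      have h1 := hf1B x (Ioo_subset_Icc_self hx)
      rw [hf1_def, derivWithin_of_mem_nhds (hnhds x hx)] at h1
      linarith
  have hflin : ∀ x ∈ Icc a b, A + B * (x - a) ≤ f x := by
    intro x hx
    have := hphi ha_mem hx hx.1
    simp only at this
    nlinarith [this]
  -- f is monotone
  have hfmono : MonotoneOn f (Icc a b) := by
    apply monotoneOn_of_deriv_nonneg (convex_Icc a b) hf_diff.continuousOn
    · rw [interior_Icc]
      exact fun x hx => ((hf_diff x (Ioo_subset_Icc_self hx)).differentiableAt
        (hnhds x hx)).differentiableWithinAt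
    · intro x hx
      rw [interior_Icc] at hx
      rw [← derivWithin_of_mem_nhds (hnhds x hx)]
      have := hf1B x (Ioo_subset_Icc_self hx)
      linarith
  -- continuity facts
  have hfc : ContinuousOn f (Icc a b) := hf_diff.continuousOn
  have hfne : ∀ x ∈ Icc a b, f x ≠ 0 := fun x hx => (hf_pos x hx).ne'
  have hgf : ContinuousOn (fun t => g t / f t) (Icc a b) := hg_cont.div hfc hfne
  have int_gf : IntervalIntegrable (fun t => g t / f t) volume a b := by
    apply ContinuousOn.intervalIntegrable; rwa [huIcc]
  set h : ℝ → ℝ := fun x => ∫ t in a..x, g t / f t with hh_def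
  have hh_cont : ContinuousOn h (Icc a b) := by
    rw [← huIcc]
    exact intervalIntegral.continuousOn_primitive_interval
      (by rw [huIcc]; exact hgf.integrableOn_compact isCompact_Icc)
  have hh_nonneg : ∀ x ∈ Icc a b, 0 ≤ h x := by
    intro x hx
    apply intervalIntegral.integral_nonneg hx.1
    intro t ht
    exact div_nonneg (hg_nonneg t ⟨ht.1, ht.2.trans hx.2⟩)
      (hf_pos t ⟨ht.1, ht.2.trans hx.2⟩).le
  set u : ℝ → ℝ := fun x => Real.log (A + B * (x - a)) - Real.log A with hu_def
  have hPpos : ∀ x ∈ Icc a b, 0 < A + B * (x - a) := by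
    intro x hx; nlinarith [hx.1]
  have hu_nonneg : ∀ x ∈ Icc a b, 0 ≤ u x := by
    intro x hx
    have : Real.log A ≤ Real.log (A + B * (x - a)) :=
      Real.log_le_log hA (by nlinarith [hx.1])
    simp only [hu_def]; linarith
  -- integral of the inverse linear function
  have hinv_int : ∀ x ∈ Icc a b, (∫ t in a..x, (A + B * (t - a))⁻¹) = u x / B := by
    intro x hx
    have hd : ∀ t ∈ Set.uIcc a x, HasDerivAt (fun s => Real.log (A + B * (s - a)) / B)
        ((A + B * (t - a))⁻¹) t := by
      intro t ht
      rw [Set.uIcc_of_le hx.1] at ht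
      have htpos : 0 < A + B * (t - a) := hPpos t ⟨ht.1, ht.2.trans hx.2⟩
      have h1 : HasDerivAt (fun s : ℝ => A + B * (s - a)) B t := by
        simpa using (((hasDerivAt_id t).sub_const a).const_mul B).const_add A
      have h2 := (Real.hasDerivAt_log htpos.ne').comp t h1
      have h3 := h2.div_const B
      refine h3.congr_deriv ?_
      rw [mul_div_cancel_right₀ _ hB.ne']
    have hint : IntervalIntegrable (fun t => (A + B * (t - a))⁻¹) volume a x := by
      apply ContinuousOn.intervalIntegrable
      apply ContinuousOn.inv₀
      · fun_prop
      · intro t ht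
        rw [Set.uIcc_of_le hx.1] at ht
        exact (hPpos t ⟨ht.1, ht.2.trans hx.2⟩).ne'
    rw [intervalIntegral.integral_eq_sub_of_hasDerivAt hd hint]
    simp only [hu_def]
    rw [sub_div]
    congr 2
    ring_nf
  -- h x ≤ g x * u x / B
  have hh_le : ∀ x ∈ Icc a b, h x ≤ g x * u x / B := by
    intro x hx
    have hsub : Icc a x ⊆ Icc a b := Icc_subset_Icc le_rfl hx.2
    have step : h x ≤ ∫ t in a..x, g x * (A + B * (t - a))⁻¹ := by
      apply intervalIntegral.integral_mono_on hx.1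
      · exact int_gf.mono_set (by rw [Set.uIcc_of_le hx.1, huIcc]; exact hsub)
      · apply ContinuousOn.intervalIntegrable
        apply ContinuousOn.mul continuousOn_const
        apply ContinuousOn.inv₀
        · fun_prop
        · intro t ht
          rw [Set.uIcc_of_le hx.1] at ht
          exact (hPpos t (hsub ht)).ne'
      · intro t ht
        have htm : t ∈ Icc a b := hsub ht
        calc g t / f t ≤ g x / (A + B * (t - a)) :=
              div_le_div₀ (hg_nonneg x hx) (hg_mono htm hx ht.2) (hPpos t htm) (hflin t htm)
          _ = g x * (A + B * (t - a))⁻¹ := by rw [div_eq_mul_inv]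
    calc h x ≤ ∫ t in a..x, g x * (A + B * (t - a))⁻¹ := step
      _ = g x * (u x / B) := by rw [intervalIntegral.integral_const_mul, hinv_int x hx]
      _ = g x * u x / B := by ring
  -- key exponential bound
  have hkey : ∀ x ∈ Icc a b,
      A ^ (n + 1) * (1 + ((n : ℝ) + 1) ^ n * u x ^ n / n.factorial) ≤ f x ^ (n + 1) := by
    intro x hx
    have hP := hPpos x hx
    have hPA : A ≤ A + B * (x - a) := by nlinarith [hx.1]
    have hr : (1 : ℝ) ≤ (A + B * (x - a)) / A := (one_le_div hA).2 hPA
    have hu_eq : u x = Real.log ((A + B * (x - a)) / A) := by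
      simp only [hu_def]; rw [Real.log_div hP.ne' hA.ne']
    have hexp : Real.exp (((n : ℝ) + 1) * u x) = ((A + B * (x - a)) / A) ^ (n + 1) := by
      rw [hu_eq]
      rw [show ((n : ℝ) + 1) = ((n + 1 : ℕ) : ℝ) by push_cast; ring]
      rw [Real.exp_nat_mul, Real.exp_log (by positivity)]
    have hun := hu_nonneg x hx
    have hb1 : 1 + (((n : ℝ) + 1) * u x) ^ n / n.factorial ≤ Real.exp (((n : ℝ) + 1) * u x) :=
      aux_one_add_pow_le_exp (mul_nonneg (by positivity) hun) n hn
    have hb2 : 1 + ((n : ℝ) + 1) ^ n * u x ^ n / n.factorial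
        ≤ ((A + B * (x - a)) / A) ^ (n + 1) := by
      rw [← hexp]
      calc 1 + ((n : ℝ) + 1) ^ n * u x ^ n / n.factorial
          = 1 + (((n : ℝ) + 1) * u x) ^ n / n.factorial := by rw [mul_pow]
        _ ≤ _ := hb1
    have hb3 : A ^ (n + 1) * (1 + ((n : ℝ) + 1) ^ n * u x ^ n / n.factorial)
        ≤ A ^ (n + 1) * ((A + B * (x - a)) / A) ^ (n + 1) := by
      apply mul_le_mul_of_nonneg_left hb2 (by positivity)
    calc A ^ (n + 1) * (1 + ((n : ℝ) + 1) ^ n * u x ^ n / n.factorial)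
        ≤ A ^ (n + 1) * ((A + B * (x - a)) / A) ^ (n + 1) := hb3
      _ = (A + B * (x - a)) ^ (n + 1) := by
          rw [div_pow]
          field_simp
      _ ≤ f x ^ (n + 1) := pow_le_pow_left₀ hP.le (hflin x hx) _
  set C0 : ℝ := ((n : ℝ) + 1) ^ n / n.factorial with hC0_def
  have hC0 : 0 < C0 := by positivity
  have hfble : ∀ x ∈ Icc a b, f x ≤ f b := fun x hx => hfmono hx hb_mem hx.2
  -- pointwise main inequality
  have hmain : ∀ x ∈ Icc a b,
      A ^ (n+1) * g a ^ (n+1) / f b + (A ^ (n+1) * B ^ n * C0) * (h x ^ n * (g x / f x))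
        ≤ f x ^ n * g x ^ (n+1) := by
    intro x hx
    have hfx := hf_pos x hx
    have hgx := hg_nonneg x hx
    have hga := hg_nonneg a ha_mem
    have hgax : g a ≤ g x := hg_mono ha_mem hx hx.1
    have hfxb := hfble x hx
    have hfb := hf_pos b hb_mem
    have hun := hu_nonneg x hx
    have e1 : A ^ (n+1) * g a ^ (n+1) / f b ≤ A ^ (n+1) * g x ^ (n+1) / f x :=
      div_le_div₀ (by positivity)
        (mul_le_mul_of_nonneg_left (pow_le_pow_left₀ hga hgax _) (by positivity)) hfx hfxb
    have hhx := hh_nonneg x hx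
    have hhle := hh_le x hx
    have hpow : h x ^ n ≤ (g x * u x / B) ^ n := pow_le_pow_left₀ hhx hhle n
    have e2 : (A ^ (n+1) * B ^ n * C0) * (h x ^ n * (g x / f x))
        ≤ A ^ (n+1) * C0 * (u x ^ n * g x ^ (n+1)) / f x := by
      calc (A ^ (n+1) * B ^ n * C0) * (h x ^ n * (g x / f x))
          ≤ (A ^ (n+1) * B ^ n * C0) * ((g x * u x / B) ^ n * (g x / f x)) := by
            apply mul_le_mul_of_nonneg_left _ (by positivity)
            exact mul_le_mul_of_nonneg_right hpow (div_nonneg hgx hfx.le)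
        _ = A ^ (n+1) * C0 * (u x ^ n * g x ^ (n+1)) / f x := by
            rw [div_pow, mul_pow]
            field_simp
            ring
    have e3 : A ^ (n+1) * g x ^ (n+1) / f x + A ^ (n+1) * C0 * (u x ^ n * g x ^ (n+1)) / f x
        ≤ f x ^ n * g x ^ (n+1) := by
      have hk := hkey x hx
      have heq : A ^ (n+1) * g x ^ (n+1) / f x + A ^ (n+1) * C0 * (u x ^ n * g x ^ (n+1)) / f x
          = (A ^ (n+1) * (1 + ((n : ℝ) + 1) ^ n * u x ^ n / n.factorial)) * (g x ^ (n+1) / f x) := by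
        rw [hC0_def]; field_simp
      rw [heq]
      calc (A ^ (n+1) * (1 + ((n : ℝ) + 1) ^ n * u x ^ n / n.factorial)) * (g x ^ (n+1) / f x)
          ≤ f x ^ (n+1) * (g x ^ (n+1) / f x) :=
            mul_le_mul_of_nonneg_right hk (by positivity)
        _ = f x ^ n * g x ^ (n+1) := by
            rw [pow_succ]
            field_simp
    linarith [e1, e2, e3]
  -- integrability
  have hI1 : IntervalIntegrable (fun x => f x ^ n * g x ^ (n+1)) volume a b := by
    apply ContinuousOn.intervalIntegrable
    rw [huIcc]
    exact (hfc.pow n).mul (hg_cont.pow (n+1))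
  have hL2 : IntervalIntegrable (fun x => h x ^ n * (g x / f x)) volume a b := by
    apply ContinuousOn.intervalIntegrable
    rw [huIcc]
    exact (hh_cont.pow n).mul hgf
  have hLint : IntervalIntegrable
      (fun x => A ^ (n+1) * g a ^ (n+1) / f b + (A ^ (n+1) * B ^ n * C0) * (h x ^ n * (g x / f x)))
      volume a b := intervalIntegrable_const.add (hL2.const_mul _)
  have step1 : (∫ x in a..b,
        (A ^ (n+1) * g a ^ (n+1) / f b + (A ^ (n+1) * B ^ n * C0) * (h x ^ n * (g x / f x))))
      ≤ ∫ x in a..b, f x ^ n * g x ^ (n+1) :=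
    intervalIntegral.integral_mono_on hab' hLint hI1 hmain
  -- FTC
  have hftc : (∫ x in a..b, h x ^ n * (g x / f x)) = h b ^ (n+1) / ((n : ℝ) + 1) := by
    have hH : ∀ x ∈ Ioo a b, HasDerivWithinAt (fun y => h y ^ (n+1) / ((n : ℝ) + 1))
        (h x ^ n * (g x / f x)) (Ioi x) x := by
      intro x hx
      have hxm : x ∈ Icc a b := Ioo_subset_Icc_self hx
      have hca : ContinuousAt (fun t => g t / f t) x := (hgf x hxm).continuousAt (hnhds x hx)
      have hmeas : StronglyMeasurableAtFilter (fun t => g t / f t) (nhds x) volume :=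
        ContinuousOn.stronglyMeasurableAtFilter isOpen_Ioo (hgf.mono Ioo_subset_Icc_self) x hx
      have hint : IntervalIntegrable (fun t => g t / f t) volume a x :=
        int_gf.mono_set (by rw [Set.uIcc_of_le hxm.1, huIcc]; exact Icc_subset_Icc le_rfl hxm.2)
      have hd : HasDerivAt h (g x / f x) x :=
        intervalIntegral.integral_hasDerivAt_right hint hmeas hca
      have hd2 : HasDerivAt (fun y => h y ^ (n+1) / ((n : ℝ) + 1)) (h x ^ n * (g x / f x)) x := by
        have hdp := (hd.pow (n+1)).div_const ((n : ℝ) + 1)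
        have hne : ((n : ℝ) + 1) ≠ 0 := by positivity
        refine hdp.congr_deriv ?_
        rw [Nat.add_sub_cancel]
        push_cast
        rw [mul_assoc, mul_div_cancel_left₀ _ hne]
      exact hd2.hasDerivWithinAt
    have hHcont : ContinuousOn (fun y => h y ^ (n+1) / ((n : ℝ) + 1)) (Icc a b) :=
      (hh_cont.pow (n+1)).div_const _
    rw [intervalIntegral.integral_eq_sub_of_hasDeriv_right_of_le hab' hHcont hH hL2]
    have hha : h a = 0 := intervalIntegral.integral_same
    rw [hha]
    rw [zero_pow (by omega : n + 1 ≠ 0)]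
    ring
  have step2 : (b - a) * (A ^ (n+1) * g a ^ (n+1) / f b)
      + (A ^ (n+1) * B ^ n * C0) * (h b ^ (n+1) / ((n : ℝ) + 1))
      ≤ ∫ x in a..b, f x ^ n * g x ^ (n+1) := by
    have hs := step1
    rw [intervalIntegral.integral_add intervalIntegrable_const (hL2.const_mul _),
        intervalIntegral.integral_const, intervalIntegral.integral_const_mul, hftc] at hs
    simpa [smul_eq_mul] using hs
  -- final algebra
  have hb_eq : (∫ x in a..b, g x / f x) = h b := rfl
  rw [hb_eq]
  obtain ⟨m, rfl⟩ : ∃ m, n = m + 1 := ⟨n - 1, (Nat.succ_pred_eq_of_pos hn).symm⟩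
  simp only [Nat.add_sub_cancel]
  have hfb := hf_pos b hb_mem
  have hfbne : f b ≠ 0 := hfb.ne'
  have hAne : A ≠ 0 := hA.ne'
  have hfacne : ((m+1).factorial : ℝ) ≠ 0 := by positivity
  have key : ((b - a) * (A ^ (m+1+1) * g a ^ (m+1+1) / f b)
      + (A ^ (m+1+1) * B ^ (m+1) * C0) * (h b ^ (m+1+1) / (((m+1 : ℕ) : ℝ) + 1))) / A ^ (m+1+1)
      ≤ (1 / A ^ (m+1+1)) * ∫ x in a..b, f x ^ (m+1) * g x ^ (m+1+1) := by
    rw [one_div, inv_mul_eq_div]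
    exact (div_le_div_iff_of_pos_right (by positivity)).mpr step2
  refine le_trans (le_of_eq ?_) key
  rw [hC0_def]
  push_cast
  field_simp
  ring
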